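/- Let Φ be a root system with base Δ, and let α = Σ_i α^i Δ_i be a positive root whose coefficient α^k at the simple root Δ_k is non-zero. Then α can be constructed by successively adding simple roots starting with Δ_k, such that every intermediate partial sum is a root. Equivalently, there is a sequence of positive roots β_1 = Δ_k, β_2, ..., β_m = α with each β_{j+1} − β_j a simple root. -/

import Mathlib

/-- A reduced crystallographic root system `Φ` in a real inner product space `V`,
together with a fixed base `Δ` of simple roots. -/
structure RootSystemWithBase (V : Type*) [NormedAddCommGroup V] [InnerProductSpace ℝ V] where
  Φ : Set V
  Δ : Finset V
  finite : Φ.Finite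
  base_sub : ↑Δ ⊆ Φ
  ne_zero : ∀ α ∈ Φ, α ≠ 0
  reduced : ∀ α ∈ Φ, ∀ t : ℝ, t • α ∈ Φ → t = 1 ∨ t = -1
  reflect : ∀ α ∈ Φ, ∀ β ∈ Φ,
    β - (2 * (inner ℝ β α : ℝ) / (inner ℝ α α : ℝ)) • α ∈ Φ
  crystal : ∀ α ∈ Φ, ∀ β ∈ Φ, ∃ n : ℤ, (2 * (inner ℝ β α : ℝ) / (inner ℝ α α : ℝ)) = n
  base_indep : LinearIndependent ℝ (fun s : {x // x ∈ Δ} => (s : V))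
  base_expand : ∀ α ∈ Φ, ∃ c : V → ℤ,
    α = ∑ s ∈ Δ, (c s : ℝ) • s ∧ ((∀ s ∈ Δ, 0 ≤ c s) ∨ (∀ s ∈ Δ, c s ≤ 0))

variable {V : Type*} [NormedAddCommGroup V] [InnerProductSpace ℝ V]

/-- A positive root: a root whose coefficients with respect to the base are non-negative. -/
def RootSystemWithBase.IsPositiveRoot (R : RootSystemWithBase V) (α : V) : Prop :=
  α ∈ R.Φ ∧ ∃ c : V → ℤ, α = ∑ s ∈ R.Δ, (c s : ℝ) • s ∧ ∀ s ∈ R.Δ, 0 ≤ c s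

namespace RootSystemWithBase

open scoped Classical

variable (R : RootSystemWithBase V)

lemma inner_self_pos' {α : V} (hα : α ∈ R.Φ) : 0 < (inner ℝ α α : ℝ) :=
  lt_of_le_of_ne real_inner_self_nonneg
    (fun h => R.ne_zero α hα (inner_self_eq_zero.mp h.symm))

lemma coeff_unique {c d : V → ℝ}
    (h : ∑ s ∈ R.Δ, c s • s = ∑ s ∈ R.Δ, d s • s) : ∀ s ∈ R.Δ, c s = d s := by
  intro s hs
  have h0 : ∑ x ∈ R.Δ, (c x - d x) • x = (0 : V) := by
    rw [Finset.sum_congr rfl (fun x _ => sub_smul (c x) (d x) x), Finset.sum_sub_distrib, h,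
      sub_self]
  have h1 : ∑ x : {y // y ∈ R.Δ}, (c x.1 - d x.1) • (x.1 : V) = 0 := by
    rw [Finset.univ_eq_attach, Finset.sum_attach R.Δ (fun x => (c x - d x) • x)]
    exact h0
  have h2 := Fintype.linearIndependent_iff.mp R.base_indep (fun x => c x.1 - d x.1) h1 ⟨s, hs⟩
  simpa [sub_eq_zero] using h2

lemma coeff_unique_int {c d : V → ℤ}
    (h : ∑ s ∈ R.Δ, (c s : ℝ) • s = ∑ s ∈ R.Δ, (d s : ℝ) • s) : ∀ s ∈ R.Δ, c s = d s := by
  intro s hs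
  exact_mod_cast R.coeff_unique h s hs

lemma neg_mem {α : V} (hα : α ∈ R.Φ) : -α ∈ R.Φ := by
  have h := R.reflect α hα α hα
  have hip : (inner ℝ α α : ℝ) ≠ 0 := ne_of_gt (R.inner_self_pos' hα)
  rw [show 2 * (inner ℝ α α : ℝ) / (inner ℝ α α : ℝ) = 2 by field_simp] at h
  have : α - (2 : ℝ) • α = -α := by
    rw [two_smul]; abel
  rwa [this] at h

lemma sub_mem_of_inner_pos {α β : V} (hα : α ∈ R.Φ) (hβ : β ∈ R.Φ) (hne : α ≠ β)
    (hip : 0 < (inner ℝ α β : ℝ)) : α - β ∈ R.Φ := by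
  have hAA := R.inner_self_pos' hα
  have hBB := R.inner_self_pos' hβ
  have hsym : (inner ℝ β α : ℝ) = (inner ℝ α β : ℝ) := by rw [real_inner_comm]
  by_cases hdep : ∃ r : ℝ, r ≠ 0 ∧ β = r • α
  · obtain ⟨r, hr0, hr⟩ := hdep
    rcases R.reduced α hα r (hr ▸ hβ) with h1 | h1
    · exact absurd (by rw [hr, h1, one_smul]) (Ne.symm hne)
    · exfalso
      have : (inner ℝ α β : ℝ) = -(inner ℝ α α : ℝ) := by
        rw [hr, h1, real_inner_smul_right]; ring
      linarith
  · have hα0 : α ≠ 0 := R.ne_zero α hα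
    have hβ0 : β ≠ 0 := R.ne_zero β hβ
    have hna : (0:ℝ) < ‖α‖ := norm_pos_iff.mpr hα0
    have hnb : (0:ℝ) < ‖β‖ := norm_pos_iff.mpr hβ0
    have hcs : |(inner ℝ α β : ℝ) / (‖α‖ * ‖β‖)| < 1 := by
      rcases lt_or_eq_of_le (abs_real_inner_div_norm_mul_norm_le_one α β) with h | h
      · exact h
      · exact absurd (((abs_real_inner_div_norm_mul_norm_eq_one_iff α β).mp h).2) hdep
    have habs : |(inner ℝ α β : ℝ)| < ‖α‖ * ‖β‖ := by
      rw [abs_div, abs_of_pos (by positivity : (0:ℝ) < ‖α‖ * ‖β‖), div_lt_one (by positivity)]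
        at hcs
      exact hcs
    have hsq : (inner ℝ α β : ℝ) * (inner ℝ α β : ℝ) < (inner ℝ α α : ℝ) * (inner ℝ β β : ℝ) := by
      rw [real_inner_self_eq_norm_mul_norm, real_inner_self_eq_norm_mul_norm]
      have h2 := mul_self_lt_mul_self (abs_nonneg (inner ℝ α β : ℝ)) habs
      rw [← abs_mul, abs_mul_self] at h2
      nlinarith [h2]
    obtain ⟨na, hna'⟩ := R.crystal α hα β hβ
    obtain ⟨nb, hnb'⟩ := R.crystal β hβ α hα
    have hnapos : (0:ℝ) < na := by
      rw [← hna']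
      exact div_pos (by linarith) hAA
    have hnbpos : (0:ℝ) < nb := by
      rw [← hnb']
      exact div_pos (by linarith) hBB
    have hprod : (na : ℝ) * nb < 4 := by
      rw [← hna', ← hnb', hsym, div_mul_div_comm, div_lt_iff₀ (by positivity)]
      nlinarith
    have hna1 : 1 ≤ na := by exact_mod_cast hnapos
    have hnb1 : 1 ≤ nb := by exact_mod_cast hnbpos
    have hprod' : na * nb < 4 := by exact_mod_cast hprod
    have : na = 1 ∨ nb = 1 := by
      by_contra hcon
      push_neg at hcon
      have h2a : 2 ≤ na := by omega
      have h2b : 2 ≤ nb := by omega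
      nlinarith
    rcases this with h1 | h1
    · have h := R.reflect α hα β hβ
      rw [hna', h1] at h
      have h' := R.neg_mem h
      have : -(β - ((1:ℤ):ℝ) • α) = α - β := by push_cast; rw [one_smul]; abel
      rwa [this] at h'
    · have h := R.reflect β hβ α hα
      rw [hnb', h1] at h
      have : α - ((1:ℤ):ℝ) • β = α - β := by push_cast; rw [one_smul]
      rwa [this] at h

lemma indicator_sum_real {u : V} (hu : u ∈ R.Δ) :
    ∑ x ∈ R.Δ, (if x = u then (1:ℝ) else 0) • x = u := by
  simp only [ite_smul, one_smul, zero_smul]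
  rw [Finset.sum_ite_eq' R.Δ u (fun x => x)]
  simp [hu]

lemma inner_coeff_sum (c : V → ℤ) (x : V) :
    (inner ℝ x (∑ s ∈ R.Δ, (c s : ℝ) • s) : ℝ) = ∑ s ∈ R.Δ, (c s : ℝ) * (inner ℝ x s : ℝ) := by
  rw [inner_sum]
  exact Finset.sum_congr rfl (fun s _ => real_inner_smul_right x s _)

lemma coeff_sum_inner (c : V → ℤ) (x : V) :
    (inner ℝ (∑ s ∈ R.Δ, (c s : ℝ) • s) x : ℝ) = ∑ s ∈ R.Δ, (c s : ℝ) * (inner ℝ s x : ℝ) := by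
  rw [sum_inner]
  exact Finset.sum_congr rfl (fun s _ => real_inner_smul_left s x _)

lemma simple_inner_nonpos {s t : V} (hs : s ∈ R.Δ) (ht : t ∈ R.Δ) (hne : s ≠ t) :
    (inner ℝ s t : ℝ) ≤ 0 := by
  by_contra h
  push_neg at h
  have hst : s - t ∈ R.Φ :=
    R.sub_mem_of_inner_pos (R.base_sub hs) (R.base_sub ht) hne h
  obtain ⟨d, hd, hsign⟩ := R.base_expand _ hst
  have heq : ∑ x ∈ R.Δ, ((d x : ℝ)) • x
      = ∑ x ∈ R.Δ, ((if x = s then (1:ℝ) else 0) - (if x = t then (1:ℝ) else 0)) • x := by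
    rw [← hd, Finset.sum_congr rfl (fun x _ => sub_smul _ _ x), Finset.sum_sub_distrib,
      R.indicator_sum_real hs, R.indicator_sum_real ht]
  have hds := R.coeff_unique heq s hs
  have hdt := R.coeff_unique heq t ht
  rw [if_pos rfl, if_neg hne] at hds
  rw [if_neg (Ne.symm hne), if_pos rfl] at hdt
  rcases hsign with hsgn | hsgn
  · have := hsgn t ht
    rw [show d t = -1 by exact_mod_cast hdt] at this
    omega
  · have := hsgn s hs
    rw [show d s = 1 by exact_mod_cast hds] at this
    omega

lemma indicator_sum_int {u : V} (hu : u ∈ R.Δ) :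
    ∑ x ∈ R.Δ, (((if x = u then (1:ℤ) else 0) : ℤ) : ℝ) • x = u := by
  have h : ∀ x ∈ R.Δ, (((if x = u then (1:ℤ) else 0) : ℤ) : ℝ) • x
      = (if x = u then (1:ℝ) else 0) • x := fun x _ => by by_cases h : x = u <;> simp [h]
  rw [Finset.sum_congr rfl h, R.indicator_sum_real hu]

lemma sub_coeff (c : V → ℤ) {u : V} (hu : u ∈ R.Δ) :
    ∑ x ∈ R.Δ, (((c x - if x = u then 1 else 0) : ℤ) : ℝ) • x
      = (∑ x ∈ R.Δ, ((c x : ℤ) : ℝ) • x) - u := by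
  have h : ∀ x, (((c x - if x = u then 1 else 0) : ℤ) : ℝ) • x
      = ((c x : ℤ) : ℝ) • x - (if x = u then (1:ℝ) else 0) • x := by
    intro x
    split <;> push_cast <;> rw [sub_smul] <;> simp
  rw [Finset.sum_congr rfl (fun x _ => h x), Finset.sum_sub_distrib, R.indicator_sum_real hu]

lemma add_coeff (c : V → ℤ) {u : V} (hu : u ∈ R.Δ) :
    ∑ x ∈ R.Δ, (((c x + if x = u then 1 else 0) : ℤ) : ℝ) • x
      = (∑ x ∈ R.Δ, ((c x : ℤ) : ℝ) • x) + u := by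
  have h : ∀ x, (((c x + if x = u then 1 else 0) : ℤ) : ℝ) • x
      = ((c x : ℤ) : ℝ) • x + (if x = u then (1:ℝ) else 0) • x := by
    intro x
    split <;> push_cast <;> rw [add_smul] <;> simp
  rw [Finset.sum_congr rfl (fun x _ => h x), Finset.sum_add_distrib, R.indicator_sum_real hu]

lemma sub_coeff_sum (c : V → ℤ) {u : V} (hu : u ∈ R.Δ) :
    ∑ x ∈ R.Δ, (c x - if x = u then 1 else 0) = (∑ x ∈ R.Δ, c x) - 1 := by
  rw [Finset.sum_sub_distrib, Finset.sum_ite_eq' R.Δ u (fun _ => (1:ℤ)), if_pos hu]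

lemma simple_isPositiveRoot {u : V} (hu : u ∈ R.Δ) : R.IsPositiveRoot u :=
  ⟨R.base_sub hu, fun x => if x = u then 1 else 0, (R.indicator_sum_int hu).symm,
    fun x _ => by dsimp only; split <;> omega⟩

lemma inner_nonpos_of_coeffs {k : V} (d : V → ℤ) (hk : k ∈ R.Δ) (hd0 : d k = 0)
    (hdpos : ∀ s ∈ R.Δ, 0 ≤ d s) :
    (inner ℝ (∑ s ∈ R.Δ, ((d s : ℤ) : ℝ) • s) k : ℝ) ≤ 0 := by
  rw [R.coeff_sum_inner]
  apply Finset.sum_nonpos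
  intro x hx
  by_cases hxk : x = k
  · simp [hxk, hd0]
  · exact mul_nonpos_of_nonneg_of_nonpos (by exact_mod_cast hdpos x hx)
      (R.simple_inner_nonpos hx hk hxk)

lemma chain_aux : ∀ n : ℕ, ∀ α k : V, ∀ c : V → ℤ,
    α ∈ R.Φ → α = ∑ s ∈ R.Δ, (c s : ℝ) • s → (∀ s ∈ R.Δ, 0 ≤ c s) → k ∈ R.Δ → c k ≠ 0 →
    (∑ s ∈ R.Δ, c s).toNat ≤ n →
    ∃ (m : ℕ) (β : ℕ → V), β 0 = k ∧ β m = α ∧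
      (∀ j ≤ m, R.IsPositiveRoot (β j)) ∧
      (∀ j < m, β (j + 1) - β j ∈ R.Δ) := by
  intro n
  induction n with
  | zero =>
    intro α k c hα hc hpos hk hck hfuel
    exfalso
    have hck1 : 1 ≤ c k := lt_of_le_of_ne (hpos k hk) (Ne.symm hck)
    have hsum1 : (1:ℤ) ≤ ∑ s ∈ R.Δ, c s :=
      le_trans hck1 (Finset.single_le_sum (fun s hs => hpos s hs) hk)
    omega
  | succ n IH =>
    intro α k c hα hc hpos hk hck hfuel
    have hck1 : 1 ≤ c k := lt_of_le_of_ne (hpos k hk) (Ne.symm hck)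
    have hsum1 : (1:ℤ) ≤ ∑ s ∈ R.Δ, c s :=
      le_trans hck1 (Finset.single_le_sum (fun s hs => hpos s hs) hk)
    by_cases hak : α = k
    · exact ⟨0, fun _ => k, rfl, by rw [hak],
        fun j _ => R.simple_isPositiveRoot hk, fun j hj => absurd hj (Nat.not_lt_zero j)⟩
    by_cases hA : ∃ s ∈ R.Δ, 0 < (inner ℝ α s : ℝ) ∧ 1 ≤ c s ∧ (s ≠ k ∨ 2 ≤ c k)
    · -- Case A: descend by a simple root keeping the k-coefficient positive.
      obtain ⟨s, hs, hips, hcs1, hor⟩ := hA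
      have hαs : α ≠ s := by
        intro he
        have huniq : ∀ x ∈ R.Δ, c x = (if x = s then 1 else 0 : ℤ) := by
          apply R.coeff_unique_int
          rw [← hc, R.indicator_sum_int hs, he]
        have hckval := huniq k hk
        rcases hor with hne' | h2
        · rw [if_neg (fun h : k = s => hne' h.symm)] at hckval; omega
        · by_cases hks : k = s
          · rw [if_pos hks] at hckval; omega
          · rw [if_neg hks] at hckval; omega
      have hsub : α - s ∈ R.Φ := R.sub_mem_of_inner_pos hα (R.base_sub hs) hαs hips
      set c' : V → ℤ := fun x => c x - if x = s then 1 else 0 with hc'def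
      have hc'sum : α - s = ∑ x ∈ R.Δ, ((c' x : ℤ) : ℝ) • x := by
        rw [hc'def]
        rw [R.sub_coeff c hs, ← hc]
      have hpos' : ∀ x ∈ R.Δ, 0 ≤ c' x := by
        intro x hx
        rw [hc'def]
        dsimp only
        split
        · next h => rw [h]; omega
        · have := hpos x hx; omega
      have hck' : c' k ≠ 0 := by
        rw [hc'def]
        dsimp only
        by_cases hks : k = s
        · rw [if_pos hks]
          rcases hor with hne' | h2
          · exact absurd hks.symm hne'
          · omega
        · rw [if_neg hks]; omega
      have hfuel' : (∑ x ∈ R.Δ, c' x).toNat ≤ n := by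
        have := R.sub_coeff_sum c hs
        rw [hc'def]
        dsimp only
        omega
      obtain ⟨m, β, hβ0, hβm, hβpos, hβdiff⟩ := IH (α - s) k c' hsub hc'sum hpos' hk hck' hfuel'
      refine ⟨m + 1, fun j => if j ≤ m then β j else α, ?_, ?_, ?_, ?_⟩
      · simp only [Nat.zero_le, if_pos]; exact hβ0
      · simp only [if_neg (show ¬ m + 1 ≤ m by omega)]
      · intro j hj
        by_cases hjm : j ≤ m
        · simp only [if_pos hjm]; exact hβpos j hjm
        · simp only [if_neg hjm]; exact ⟨hα, c, hc, hpos⟩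
      · intro j hj
        by_cases hjm : j < m
        · simp only [if_pos (Nat.succ_le_of_lt hjm), if_pos (Nat.le_of_lt hjm)]
          exact hβdiff j hjm
        · have hjeq : j = m := by omega
          subst hjeq
          simp only [if_neg (show ¬ j + 1 ≤ j by omega), if_pos (le_refl j), hβm]
          have h5 : α - (α - s) = s := by abel
          rw [h5]
          exact hs
    · -- Case B
      push_neg at hA
      have hAA : 0 < (inner ℝ α α : ℝ) := R.inner_self_pos' hα
      have hkk : 0 < (inner ℝ k k : ℝ) := R.inner_self_pos' (R.base_sub hk)
      have hterm : ∀ s ∈ R.Δ, s ≠ k → (c s : ℝ) * (inner ℝ α s : ℝ) ≤ 0 := by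
        intro s hs hne
        rcases lt_or_eq_of_le (hpos s hs) with hlt | heq
        · by_cases hip : 0 < (inner ℝ α s : ℝ)
          · exact absurd (hA s hs hip (by omega)).1 hne
          · push_neg at hip
            exact mul_nonpos_of_nonneg_of_nonpos (by exact_mod_cast hpos s hs) hip
        · rw [← heq]; simp
      have hinner : (inner ℝ α α : ℝ) = ∑ s ∈ R.Δ, (c s : ℝ) * (inner ℝ α s : ℝ) := by
        have h := R.inner_coeff_sum c α
        rw [← hc] at h
        exact h
      have hsplit : (inner ℝ α α : ℝ)
          = (c k : ℝ) * (inner ℝ α k : ℝ) + ∑ s ∈ R.Δ.erase k, (c s : ℝ) * (inner ℝ α s : ℝ) := by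
        rw [hinner, ← Finset.add_sum_erase R.Δ _ hk]
      have herase : ∑ s ∈ R.Δ.erase k, (c s : ℝ) * (inner ℝ α s : ℝ) ≤ 0 :=
        Finset.sum_nonpos fun s hsE =>
          hterm s (Finset.mem_of_mem_erase hsE) (Finset.ne_of_mem_erase hsE)
      have hαk : 0 < (inner ℝ α k : ℝ) := by
        by_contra hcon
        push_neg at hcon
        have h1 : (c k : ℝ) * (inner ℝ α k : ℝ) ≤ 0 :=
          mul_nonpos_of_nonneg_of_nonpos (by exact_mod_cast hpos k hk) hcon
        linarith
      have hck2 : c k = 1 := by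
        by_contra hcon
        have := (hA k hk hαk (by omega)).2
        omega
      -- coefficients of α - k
      set c' : V → ℤ := fun x => c x - if x = k then 1 else 0 with hc'def
      have hc'sum : α - k = ∑ x ∈ R.Δ, ((c' x : ℤ) : ℝ) • x := by
        rw [hc'def, R.sub_coeff c hk, ← hc]
      have hc'k : c' k = 0 := by rw [hc'def]; simp [hck2]
      have hpos' : ∀ x ∈ R.Δ, 0 ≤ c' x := by
        intro x hx
        rw [hc'def]; dsimp only
        split
        · next h => rw [h]; omega
        · have := hpos x hx; omega
      have hβknp : (inner ℝ (α - k) k : ℝ) ≤ 0 := by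
        rw [hc'sum]
        exact R.inner_nonpos_of_coeffs c' hk hc'k hpos'
      obtain ⟨n1, hn1⟩ := R.crystal k (R.base_sub hk) α hα
      have hn1' : 2 * (inner ℝ α k : ℝ) = (n1 : ℝ) * (inner ℝ k k : ℝ) := by
        rw [div_eq_iff (ne_of_gt hkk)] at hn1
        exact hn1
      have hsubk : (inner ℝ (α - k) k : ℝ) = (inner ℝ α k : ℝ) - (inner ℝ k k : ℝ) :=
        inner_sub_left α k k
      have hn1ge : 1 ≤ n1 := by
        have h0 : (0:ℝ) < (n1 : ℝ) * (inner ℝ k k : ℝ) := by linarith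
        have h1 : (0:ℝ) < (n1:ℝ) := by
          by_contra hcon
          push_neg at hcon
          nlinarith
        have : 0 < n1 := by exact_mod_cast h1
        omega
      have hn1le : n1 ≤ 2 := by
        have h2 : (n1:ℝ) * (inner ℝ k k : ℝ) ≤ 2 * (inner ℝ k k : ℝ) := by linarith
        have : (n1:ℝ) ≤ 2 := by
          by_contra hcon
          push_neg at hcon
          nlinarith
        exact_mod_cast this
      have hn1ne2 : n1 ≠ 2 := by
        intro h2
        have hik : (inner ℝ α k : ℝ) = (inner ℝ k k : ℝ) := by
          rw [h2] at hn1'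
          push_cast at hn1'
          linarith
        have hzero : (inner ℝ (α - k) k : ℝ) = 0 := by rw [hsubk, hik]; ring
        have hnp : ∀ x ∈ R.Δ, (c' x : ℝ) * (inner ℝ x k : ℝ) ≤ 0 := by
          intro x hx
          by_cases hxk : x = k
          · rw [hxk]
            have : (c' k : ℝ) = 0 := by exact_mod_cast hc'k
            rw [this]; ring_nf; simp
          · exact mul_nonpos_of_nonneg_of_nonpos (by exact_mod_cast hpos' x hx)
              (R.simple_inner_nonpos hx hk hxk)
        have hsum0 : ∑ x ∈ R.Δ, (c' x : ℝ) * (inner ℝ x k : ℝ) = 0 := by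
          rw [← R.coeff_sum_inner c' k, ← hc'sum]
          exact hzero
        have hterms0 : ∀ x ∈ R.Δ, (c' x : ℝ) * (inner ℝ x k : ℝ) = 0 :=
          fun x hx => (Finset.sum_eq_zero_iff_of_nonpos hnp).mp hsum0 x hx
        have hself : (inner ℝ (α - k) (α - k) : ℝ) ≤ 0 := by
          have hexp : (inner ℝ (α - k) (α - k) : ℝ)
              = ∑ x ∈ R.Δ, (c' x : ℝ) * (inner ℝ (α - k) x : ℝ) := by
            have h := R.inner_coeff_sum c' (α - k)
            rw [← hc'sum] at h
            exact h
          rw [hexp]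
          apply Finset.sum_nonpos
          intro x hx
          have hsplitx : (inner ℝ (α - k) x : ℝ) = (inner ℝ α x : ℝ) - (inner ℝ k x : ℝ) :=
            inner_sub_left α k x
          rw [hsplitx, mul_sub]
          have hzero2 : (c' x : ℝ) * (inner ℝ k x : ℝ) = 0 := by
            rw [real_inner_comm]
            exact hterms0 x hx
          rw [hzero2, sub_zero]
          by_cases hxk : x = k
          · rw [hxk]
            have : (c' k : ℝ) = 0 := by exact_mod_cast hc'k
            rw [this]; simp
          · have hcx : (c' x : ℝ) = (c x : ℝ) := by
              rw [hc'def]; dsimp only; rw [if_neg hxk]; push_cast; ring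
            rw [hcx]
            exact hterm x hx hxk
        have hzero3 : α - k = 0 :=
          inner_self_eq_zero.mp (le_antisymm hself real_inner_self_nonneg)
        exact hak (by rw [← sub_eq_zero]; exact hzero3)
      have hn1eq : n1 = 1 := by omega
      have hβmem : α - k ∈ R.Φ := by
        have h := R.reflect k (R.base_sub hk) α hα
        rw [hn1, hn1eq] at h
        norm_num at h
        exact h
      have hik2 : 2 * (inner ℝ α k : ℝ) = (inner ℝ k k : ℝ) := by
        rw [hn1eq] at hn1'
        push_cast at hn1'
        linarith
      have hβkval : (inner ℝ (α - k) k : ℝ) = -(inner ℝ k k : ℝ) / 2 := by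
        rw [hsubk]; linarith
      have hexists : ∃ t ∈ R.Δ, (c' t : ℝ) * (inner ℝ t k : ℝ) < 0 := by
        by_contra hcon
        push_neg at hcon
        have h0 : 0 ≤ ∑ x ∈ R.Δ, (c' x : ℝ) * (inner ℝ x k : ℝ) := Finset.sum_nonneg hcon
        rw [← R.coeff_sum_inner c' k, ← hc'sum, hβkval] at h0
        linarith
      obtain ⟨t, ht, htneg⟩ := hexists
      have htk : (inner ℝ t k : ℝ) < 0 := by
        by_contra hcon
        push_neg at hcon
        exact absurd (mul_nonneg (by exact_mod_cast hpos' t ht) hcon) (not_le.mpr htneg)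
      have hct : 1 ≤ c' t := by
        rcases lt_or_eq_of_le (hpos' t ht) with h | h
        · omega
        · exfalso; rw [← h] at htneg; simp at htneg
      have hfuel' : (∑ x ∈ R.Δ, c' x).toNat ≤ n := by
        have := R.sub_coeff_sum c hk
        rw [hc'def]; dsimp only; omega
      obtain ⟨m, σ, hσ0, hσm, hσpos, hσdiff⟩ :=
        IH (α - k) t c' hβmem hc'sum hpos' ht (by omega) hfuel'
      -- the k-coefficient of every chain element vanishes
      have FP : ∀ i ≤ m, ∃ d : V → ℤ, σ (m - i) = ∑ x ∈ R.Δ, ((d x : ℤ) : ℝ) • x ∧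
          (∀ x ∈ R.Δ, 0 ≤ d x) ∧ d k = 0 := by
        intro i
        induction i with
        | zero =>
          intro _
          refine ⟨c', ?_, hpos', hc'k⟩
          rw [Nat.sub_zero, hσm]
          exact hc'sum
        | succ i ih =>
          intro hi1
          obtain ⟨d, hd, hdpos, hdk⟩ := ih (by omega)
          have hj1 : (m - (i+1)) + 1 = m - i := by omega
          have hult : m - (i+1) < m := by omega
          have hu : σ ((m - (i+1)) + 1) - σ (m - (i+1)) ∈ R.Δ := hσdiff (m - (i+1)) hult
          obtain ⟨hmem, e, he, hepos⟩ := hσpos (m - (i+1)) (by omega)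
          have hsum2 : ∑ x ∈ R.Δ, ((d x : ℤ) : ℝ) • x
              = ∑ x ∈ R.Δ, (((e x + if x = (σ ((m - (i+1)) + 1) - σ (m - (i+1)))
                  then 1 else 0) : ℤ) : ℝ) • x := by
            rw [R.add_coeff e hu, ← he, ← hd, ← hj1]
            abel
          have huniq := R.coeff_unique_int hsum2 k hk
          refine ⟨e, he, hepos, ?_⟩
          have hek := hepos k hk
          by_cases huk : k = σ ((m - (i+1)) + 1) - σ (m - (i+1))
          · rw [if_pos huk] at huniq; omega
          · rw [if_neg huk] at huniq; omega
      have F' : ∀ j ≤ m, ∃ d : V → ℤ, σ j = ∑ x ∈ R.Δ, ((d x : ℤ) : ℝ) • x ∧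
          (∀ x ∈ R.Δ, 0 ≤ d x) ∧ d k = 0 := by
        intro j hj
        have h := FP (m - j) (by omega)
        rw [show m - (m - j) = j by omega] at h
        exact h
      have hmono : ∀ j < m, (inner ℝ (σ (j+1)) k : ℝ) ≤ (inner ℝ (σ j) k : ℝ) := by
        intro j hj
        have hu : σ (j+1) - σ j ∈ R.Δ := hσdiff j hj
        obtain ⟨d1, hd1, hd1pos, hd1k⟩ := F' (j+1) (by omega)
        obtain ⟨d0, hd0, hd0pos, hd0k⟩ := F' j (by omega)
        have hsum2 : ∑ x ∈ R.Δ, ((d1 x : ℤ) : ℝ) • x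
            = ∑ x ∈ R.Δ, (((d0 x + if x = (σ (j+1) - σ j) then 1 else 0) : ℤ) : ℝ) • x := by
          rw [R.add_coeff d0 hu, ← hd0, ← hd1]
          abel
        have huk := R.coeff_unique_int hsum2 k hk
        have hukne : σ (j+1) - σ j ≠ k := by
          intro he
          rw [if_pos he.symm] at huk
          omega
        have hinnerle : (inner ℝ (σ (j+1) - σ j) k : ℝ) ≤ 0 :=
          R.simple_inner_nonpos hu hk hukne
        have h4 : σ (j+1) = σ j + (σ (j+1) - σ j) := by abel
        have h5 : (inner ℝ (σ (j+1)) k : ℝ)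
            = (inner ℝ (σ j) k : ℝ) + (inner ℝ (σ (j+1) - σ j) k : ℝ) := by
          conv_lhs => rw [h4]
          exact inner_add_left _ _ _
        linarith
      have hmono2 : ∀ i, ∀ j, j ≤ m → i ≤ j → (inner ℝ (σ j) k : ℝ) ≤ (inner ℝ (σ i) k : ℝ) := by
        intro i j
        induction j with
        | zero =>
          intro _ h
          exact le_of_eq (by rw [Nat.le_zero.mp h])
        | succ j ihj =>
          intro hjm hij
          by_cases hij' : i = j + 1
          · exact le_of_eq (by rw [hij'])
          · exact le_trans (hmono j (by omega)) (ihj (by omega) (by omega))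
      obtain ⟨nt, hnt⟩ := R.crystal k (R.base_sub hk) t (R.base_sub ht)
      have hnt' : 2 * (inner ℝ t k : ℝ) = (nt : ℝ) * (inner ℝ k k : ℝ) := by
        rw [div_eq_iff (ne_of_gt hkk)] at hnt
        exact hnt
      have hntneg : nt ≤ -1 := by
        have h1 : (nt:ℝ) * (inner ℝ k k : ℝ) < 0 := by linarith
        have h2 : (nt:ℝ) < 0 := by
          by_contra hcon
          push_neg at hcon
          nlinarith
        have : nt < 0 := by exact_mod_cast h2
        omega
      have htk2 : (inner ℝ t k : ℝ) ≤ -(inner ℝ k k : ℝ)/2 := by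
        have h3 : (nt:ℝ) ≤ -1 := by exact_mod_cast hntneg
        nlinarith
      have hσval : ∀ j ≤ m, (inner ℝ (σ j) k : ℝ) = -(inner ℝ k k : ℝ)/2 := by
        intro j hj
        have hlow := hmono2 j m (le_refl m) hj
        have hhigh := hmono2 0 j hj (Nat.zero_le j)
        rw [hσm, hβkval] at hlow
        rw [hσ0] at hhigh
        linarith
      have hσroot : ∀ j ≤ m, σ j + k ∈ R.Φ := by
        intro j hj
        have h := R.reflect k (R.base_sub hk) (σ j) (hσpos j hj).1
        have hco : 2 * (inner ℝ (σ j) k : ℝ) / (inner ℝ k k : ℝ) = -1 := by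
          rw [hσval j hj]
          field_simp
        rw [hco] at h
        have h7 : σ j - (-1 : ℝ) • k = σ j + k := by
          rw [neg_smul, one_smul, sub_neg_eq_add]
        rwa [h7] at h
      refine ⟨m + 1, fun j => if j = 0 then k else σ (j - 1) + k, by simp, ?_, ?_, ?_⟩
      · simp only [if_neg (show m + 1 ≠ 0 by omega), Nat.add_sub_cancel]
        rw [hσm]
        abel
      · intro j hj
        by_cases hj0 : j = 0
        · rw [hj0]
          simp only [if_pos rfl]
          exact R.simple_isPositiveRoot hk
        · simp only [if_neg hj0]
          have hjm : j - 1 ≤ m := by omega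
          obtain ⟨d, hd, hdpos, hdk⟩ := F' (j-1) hjm
          refine ⟨hσroot (j-1) hjm, fun x => d x + if x = k then 1 else 0, ?_, ?_⟩
          · rw [R.add_coeff d hk, ← hd]
          · intro x hx
            have := hdpos x hx
            dsimp only
            split <;> omega
      · intro j hj
        by_cases hj0 : j = 0
        · rw [hj0]
          simp only [if_neg (show (0:ℕ) + 1 ≠ 0 by omega), if_pos rfl]
          norm_num
          rw [hσ0]
          simpa using ht
        · obtain ⟨i, rfl⟩ : ∃ i, j = i + 1 := ⟨j - 1, by omega⟩
          simp only [if_neg (Nat.succ_ne_zero _), Nat.add_sub_cancel]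
          have h8 : σ (i + 1) + k - (σ i + k) = σ (i + 1) - σ i := by abel
          rw [h8]
          exact hσdiff i (by omega)

end RootSystemWithBase

/-- A positive root `α` whose coefficient at the simple root `k` is non-zero
can be constructed by successively adding simple roots starting with `k`, so that every
intermediate partial sum is a (positive) root. -/
theorem positive_root_chain_from_simple_root
    (R : RootSystemWithBase V) (α k : V) (c : V → ℤ)
    (hα : α ∈ R.Φ)
    (hc : α = ∑ s ∈ R.Δ, (c s : ℝ) • s)
    (hpos : ∀ s ∈ R.Δ, 0 ≤ c s)
    (hk : k ∈ R.Δ)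
    (hck : c k ≠ 0) :
    ∃ (m : ℕ) (β : ℕ → V), β 0 = k ∧ β m = α ∧
      (∀ j ≤ m, R.IsPositiveRoot (β j)) ∧
      (∀ j < m, β (j + 1) - β j ∈ R.Δ) :=
  R.chain_aux (∑ s ∈ R.Δ, c s).toNat α k c hα hc hpos hk hck le_rfl
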